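/- Let s > 0 be a real number and let α ≥ 2 be an even natural number. Then the Rapp function g(y) = y / (1 + (y/s)^α) is bounded on ℝ: for every y ∈ ℝ, |g(y)| ≤ (s/α) · (α − 1)^(1 − 1/α). -/

import Mathlib

/-- Key scalar inequality: for `t ≥ 0`, `t ≤ K/α * (1 + t^α)` where
`K = (α-1)^(1-1/α)`. -/
lemma rapp_key (α : ℕ) (hα : 2 ≤ α) {t : ℝ} (ht : 0 ≤ t) :
    t ≤ ((α : ℝ) - 1) ^ (1 - 1 / (α : ℝ)) / (α : ℝ) * (1 + t ^ α) := by
  set A : ℝ := (α : ℝ) with hA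
  have hA2 : (2 : ℝ) ≤ A := by rw [hA]; exact_mod_cast hα
  have hA1 : (1 : ℝ) < A := by linarith
  have hA0 : (0 : ℝ) < A := by linarith
  have hAm1 : (0 : ℝ) < A - 1 := by linarith
  set K : ℝ := (A - 1) ^ (1 - 1 / A) with hK
  have hK0 : 0 < K := Real.rpow_pos_of_pos hAm1 _
  set c : ℝ := K ^ (A⁻¹) with hc
  have hc0 : 0 < c := Real.rpow_pos_of_pos hK0 _
  have hpq : A.HolderConjugate (A / (A - 1)) :=
    (Real.holderConjugate_iff_eq_conjExponent hA1).2 rfl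
  have hy := Real.young_inequality_of_nonneg (mul_nonneg ht hc0.le)
    (inv_nonneg.2 hc0.le) hpq
  have h1 : (t * c) ^ A = t ^ α * K := by
    rw [Real.mul_rpow ht hc0.le, hc, ← Real.rpow_natCast t α, ← hA,
      ← Real.rpow_mul hK0.le, inv_mul_cancel₀ hA0.ne', Real.rpow_one]
  have h2 : (c⁻¹) ^ (A / (A - 1)) / (A / (A - 1)) = K / A := by
    have e1 : c⁻¹ = K ^ (-(A⁻¹)) := by rw [hc, Real.rpow_neg hK0.le]
    rw [e1, ← Real.rpow_mul hK0.le]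
    have e2 : -(A⁻¹) * (A / (A - 1)) = -(A - 1)⁻¹ := by
      field_simp
    rw [e2, hK, ← Real.rpow_mul hAm1.le]
    have e3 : (1 - 1 / A) * -(A - 1)⁻¹ = -(A⁻¹) := by
      field_simp
    have e4 : (A - 1) ^ (1 - 1 / A) = (A - 1) ^ (-(A⁻¹)) * (A - 1) := by
      rw [show (1 - 1 / A) = -(A⁻¹) + 1 by ring, Real.rpow_add hAm1, Real.rpow_one]
    rw [e3, e4]
    field_simp
  rw [h1, h2, mul_assoc, mul_inv_cancel₀ hc0.ne', mul_one] at hy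
  calc t ≤ t ^ α * K / A + K / A := hy
    _ = K / A * (1 + t ^ α) := by ring

/-- For `s > 0` and even `α ≥ 2`, the Rapp function `g(y) = y / (1 + (y/s)^α)` is
bounded on `ℝ`: `|g(y)| ≤ (s/α) (α-1)^(1-1/α)` for every real `y`. -/
theorem rapp_bounded (s : ℝ) (hs : 0 < s) (α : ℕ) (hα : 2 ≤ α) (hαe : Even α) :
    ∀ y : ℝ, |y / (1 + (y / s) ^ α)|
      ≤ (s / (α : ℝ)) * ((α : ℝ) - 1) ^ (1 - 1 / (α : ℝ)) := by
  intro y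
  set t : ℝ := |y| / s with htdef
  have ht : 0 ≤ t := div_nonneg (abs_nonneg y) hs.le
  have hpow : (y / s) ^ α = t ^ α := by
    rw [htdef, div_pow, div_pow, hαe.pow_abs]
  have hden0 : 0 < 1 + (y / s) ^ α := by
    have : 0 ≤ (y / s) ^ α := hpow ▸ pow_nonneg ht α
    linarith
  have habs : |y / (1 + (y / s) ^ α)| = s * t / (1 + t ^ α) := by
    rw [abs_div, abs_of_pos hden0, hpow, htdef]
    field_simp
  rw [habs, div_le_iff₀ (by nlinarith [pow_nonneg ht α] : (0:ℝ) < 1 + t ^ α)]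
  have key := rapp_key α hα ht
  have := mul_le_mul_of_nonneg_left key hs.le
  calc s * t ≤ s * (((α : ℝ) - 1) ^ (1 - 1 / (α : ℝ)) / (α : ℝ) * (1 + t ^ α)) := this
    _ = s / (α : ℝ) * ((α : ℝ) - 1) ^ (1 - 1 / (α : ℝ)) * (1 + t ^ α) := by ring
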